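/- Let G be a finitely generated infinite group, K a field, A a finite-dimensional K-vector space, Σ ⊆ A^G a topologically mixing linear subshift, and τ : Σ → Σ a linear cellular automaton. If τ is pointwise nilpotent (for every x ∈ Σ there is n_x with τⁿ(x) = 0 for all n ≥ n_x), then τ is nilpotent (τ^{n_0} = 0 for some n_0). -/

import Mathlib

open scoped Pointwise Uniformity


def shiftSigma (G : Type*) [Group G] {A : Type*} (D : Set G) (P : Set (D → A)) :
    Set (G → A) :=
  {x | ∀ g : G, (fun d : D => x (g * (d : G))) ∈ P}

def prodiscreteTop (G A : Type*) : TopologicalSpace (G → A) :=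
  @Pi.topologicalSpace G (fun _ => A) (fun _ => ⊥)

def IsLinearSubshift (K : Type*) {G A : Type*} [Field K] [Group G] [AddCommGroup A]
    [Module K A] (S : Set (G → A)) : Prop :=
  (∃ M : Submodule K (G → A), (M : Set (G → A)) = S) ∧
    (∀ g : G, ∀ x ∈ S, (fun h => x (g⁻¹ * h)) ∈ S) ∧
    @IsClosed _ (prodiscreteTop G A) S

def IsSFT {G A : Type*} [Group G] (S : Set (G → A)) : Prop :=
  ∃ (D : Finset G) (P : Set (↥(D : Set G) → A)), S = shiftSigma G (D : Set G) P

def IsLCA (K : Type*) {G A : Type*} [Field K] [Group G] [AddCommGroup A] [Module K A]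
    (τ : (G → A) → (G → A)) : Prop :=
  IsLinearMap K τ ∧ ∃ (M : Finset G) (μ : (↥(M : Set G) → A) → A), IsLinearMap K μ ∧
    ∀ (x : G → A) (g : G), τ x g = μ (fun m : (M : Set G) => x (g * (m : G)))

def TopMixing {G A : Type*} [Group G] (S : Set (G → A)) : Prop :=
  ∀ U V : Set (G → A), @IsOpen _ (prodiscreteTop G A) U → @IsOpen _ (prodiscreteTop G A) V →
    (U ∩ S).Nonempty → (V ∩ S).Nonempty →
    ∃ F : Finset G, ∀ g : G, g ∉ F →
      ∃ z ∈ U ∩ S, (fun h => z (g * h)) ∈ V ∩ S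

/-- Mapping a `pmap` into a subtype back down gives the original list. -/
lemma aux_map_pmap {α : Type*} (p : α → Prop) (l : List α) (hl : ∀ x ∈ l, p x) :
    (l.pmap (fun x hx => (⟨x, hx⟩ : {x // p x})) hl).map Subtype.val = l := by
  induction l with
  | nil => rfl
  | cons a l ih => simp [ih]

/-- A finitely generated group is countable. -/
lemma aux_countable_of_fg {G : Type*} [Group G] (hfg : Group.FG G) : Countable G := by
  obtain ⟨T, hT⟩ := hfg.out
  set t : Set G := ↑T ∪ (↑T : Set G)⁻¹ with ht
  have htfin : t.Finite := T.finite_toSet.union T.finite_toSet.inv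
  haveI : Countable ↥t := htfin.countable.to_subtype
  have hsurj : Function.Surjective (fun l : List ↥t => (l.map Subtype.val).prod) := by
    intro g
    have hg : g ∈ Submonoid.closure t := by
      have : g ∈ (Subgroup.closure (↑T : Set G)).toSubmonoid := by
        rw [hT]; trivial
      rwa [Subgroup.closure_toSubmonoid] at this
    obtain ⟨l, hl, hprod⟩ := Submonoid.exists_list_of_mem_closure hg
    refine ⟨l.pmap (fun x hx => (⟨x, hx⟩ : ↥t)) hl, ?_⟩
    show ((l.pmap (fun x hx => (⟨x, hx⟩ : ↥t)) hl).map Subtype.val).prod = g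
    rw [aux_map_pmap]
    exact hprod
  exact hsurj.countable

theorem stmt18 {G K A : Type*} [Group G] [Infinite G] [Field K] [AddCommGroup A]
    [Module K A] [FiniteDimensional K A] (hfg : Group.FG G)
    (S : Set (G → A)) (hlin : IsLinearSubshift K S) (hmix : TopMixing S)
    (τ : (G → A) → (G → A)) (hτ : IsLCA K τ) (hmap : Set.MapsTo τ S S)
    (hpn : ∀ x ∈ S, ∃ N : ℕ, ∀ n ≥ N, τ^[n] x = 0) :
    ∃ n₀ : ℕ, 1 ≤ n₀ ∧ ∀ x ∈ S, τ^[n₀] x = 0 := by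
  classical
  obtain ⟨⟨Smod, hSmod⟩, hshift, hclosed⟩ := hlin
  obtain ⟨hτlin, M, μ, hμlin, hrule⟩ := hτ
  haveI : Countable G := aux_countable_of_fg hfg
  -- basic algebraic facts
  have hS0 : (0 : G → A) ∈ S := by rw [← hSmod]; exact Smod.zero_mem
  have hSadd : ∀ x ∈ S, ∀ y ∈ S, x + y ∈ S := by
    intro x hx y hy
    rw [← hSmod] at hx hy ⊢
    exact Smod.add_mem hx hy
  have τ0 : τ 0 = 0 := (hτlin.mk' τ).map_zero
  have hiter0 : ∀ n : ℕ, τ^[n] (0 : G → A) = 0 := by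
    intro n
    induction n with
    | zero => rfl
    | succ n ih => rw [Function.iterate_succ_apply', ih, τ0]
  have hiteradd : ∀ (n : ℕ) (x y : G → A), τ^[n] (x + y) = τ^[n] x + τ^[n] y := by
    intro n
    induction n with
    | zero => intro x y; rfl
    | succ n ih =>
      intro x y
      rw [Function.iterate_succ_apply', Function.iterate_succ_apply',
        Function.iterate_succ_apply', ih, hτlin.map_add]
  -- the iterates of τ have finite memory
  have hmemo : ∀ n : ℕ, ∃ D : Finset G, ∀ (x y : G → A) (g : G),
      (∀ d ∈ D, x (g * d) = y (g * d)) → τ^[n] x g = τ^[n] y g := by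
    intro n
    induction n with
    | zero =>
      refine ⟨{1}, fun x y g h => ?_⟩
      simpa using h 1 (Finset.mem_singleton_self 1)
    | succ n ih =>
      obtain ⟨D, hD⟩ := ih
      refine ⟨M * D, fun x y g h => ?_⟩
      rw [Function.iterate_succ_apply', Function.iterate_succ_apply', hrule, hrule]
      congr 1
      funext m
      refine hD x y (g * (m : G)) (fun d hd => ?_)
      rw [mul_assoc]
      exact h _ (Finset.mul_mem_mul m.2 hd)
  -- τ commutes with right translations
  have hshiftτ : ∀ (g : G) (x : G → A), τ (fun h => x (g * h)) = fun h => τ x (g * h) := by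
    intro g x
    funext h
    rw [hrule, hrule]
    congr 1
    funext m
    rw [mul_assoc]
  have hshiftiter : ∀ (n : ℕ) (g : G) (x : G → A),
      τ^[n] (fun h => x (g * h)) = fun h => τ^[n] x (g * h) := by
    intro n
    induction n with
    | zero => intro g x; rfl
    | succ n ih =>
      intro g x
      rw [Function.iterate_succ_apply', Function.iterate_succ_apply', ih, hshiftτ]
  -- topological setup: the prodiscrete topology is the product of bot uniformities
  letI uA : UniformSpace A := ⊥
  haveI : DiscreteTopology A := ⟨rfl⟩
  have huA : (𝓤 A) = Filter.principal SetRel.id := rfl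
  haveI : CompleteSpace A := by
    refine ⟨fun {f} hf => ?_⟩
    have h2 : f ×ˢ f ≤ Filter.principal SetRel.id := huA ▸ hf.2
    rw [Filter.le_principal_iff, Filter.mem_prod_iff] at h2
    obtain ⟨s, hs, t, ht, hst⟩ := h2
    obtain ⟨x, hx⟩ := hf.1.nonempty_of_mem (Filter.inter_mem hs ht)
    refine ⟨x, le_trans ?_ (pure_le_nhds x)⟩
    rw [Filter.le_pure_iff]
    refine Filter.mem_of_superset hs (fun y hy => ?_)
    have : (y, x) ∈ SetRel.id := hst (Set.mk_mem_prod hy hx.2)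
    simpa using this
  haveI : Filter.IsCountablyGenerated (𝓤 A) := by
    rw [huA]; infer_instance
  haveI : CompleteSpace (G → A) := Pi.complete _
  have hSclosed : IsClosed S := hclosed
  haveI : CompleteSpace ↥S := hSclosed.completeSpace_coe
  haveI : Filter.IsCountablyGenerated (𝓤 ↥S) := by
    rw [uniformity_setCoe]
    infer_instance
  letI : PseudoMetricSpace ↥S := UniformSpace.pseudoMetricSpace ↥S
  haveI : BaireSpace ↥S := BaireSpace.of_completelyPseudoMetrizable
  haveI : Nonempty ↥S := ⟨⟨0, hS0⟩⟩
  -- continuity of τ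
  have hτcont : Continuous τ := by
    apply continuous_pi
    intro g
    have heq : (fun x : G → A => τ x g)
        = (fun x : G → A => μ (fun m : (M : Set G) => x (g * (m : G)))) :=
      funext fun x => hrule x g
    rw [heq]
    exact Continuous.comp continuous_of_discreteTopology
      (continuous_pi fun m => continuous_apply _)
  -- Baire category argument
  set C : ℕ → Set ↥S := fun n => {x : ↥S | τ^[n] (x : G → A) = 0} with hC
  have hCclosed : ∀ n, IsClosed (C n) := by
    intro n
    have : C n = (fun x : ↥S => τ^[n] (x : G → A)) ⁻¹' {0} := by
      ext x; simp [hC]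
    rw [this]
    exact isClosed_singleton.preimage ((hτcont.iterate n).comp continuous_subtype_val)
  have hCcover : ⋃ n, C n = Set.univ := by
    ext x
    simp only [Set.mem_iUnion, Set.mem_univ, iff_true, hC, Set.mem_setOf_eq]
    obtain ⟨N, hN⟩ := hpn x x.2
    exact ⟨N, hN N le_rfl⟩
  obtain ⟨n, hn⟩ := nonempty_interior_of_iUnion_of_closed hCclosed hCcover
  obtain ⟨x₀, hx₀⟩ := hn
  obtain ⟨Uamb, hUamb, hpre⟩ := isOpen_induced_iff.mp (isOpen_interior (s := C n))
  have hx₀U : (x₀ : G → A) ∈ Uamb := by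
    have : x₀ ∈ Subtype.val ⁻¹' Uamb := by rw [hpre]; exact hx₀
    exact this
  obtain ⟨Ω, u, hu, hsub⟩ := isOpen_pi_iff.mp hUamb (x₀ : G → A) hx₀U
  -- every element of S agreeing with x₀ on Ω is killed by τ^[n]
  have hcyl : ∀ x ∈ S, (∀ ω ∈ Ω, x ω = (x₀ : G → A) ω) → τ^[n] x = 0 := by
    intro x hx hxΩ
    have hxU : x ∈ Uamb := by
      apply hsub
      intro a ha
      rw [hxΩ a ha]
      exact (hu a ha).2
    have h2 : (⟨x, hx⟩ : ↥S) ∈ interior (C n) := by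
      rw [← hpre]; exact hxU
    have h3 : (⟨x, hx⟩ : ↥S) ∈ C n := interior_subset h2
    exact h3
  have hx₀n : τ^[n] (x₀ : G → A) = 0 := hcyl _ x₀.2 (fun _ _ => rfl)
  -- every element of S vanishing on Ω is killed by τ^[n]
  have hkey : ∀ w ∈ S, (∀ ω ∈ Ω, w ω = 0) → τ^[n] w = 0 := by
    intro w hw hwΩ
    have h1 : τ^[n] ((x₀ : G → A) + w) = 0 := by
      refine hcyl _ (hSadd _ x₀.2 _ hw) (fun ω hω => ?_)
      show (x₀ : G → A) ω + w ω = (x₀ : G → A) ω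
      rw [hwΩ ω hω, add_zero]
    rw [hiteradd, hx₀n, zero_add] at h1
    exact h1
  -- conclusion via mixing
  refine ⟨n + 1, Nat.le_add_left 1 n, fun y hy => ?_⟩
  funext c
  obtain ⟨D, hD⟩ := hmemo (n + 1)
  set U0 : Set (G → A) := Set.pi (Ω : Set G) (fun _ => {0}) with hU0
  set V0 : Set (G → A) := Set.pi ((D.image (fun d => c * d) : Finset G) : Set G)
    (fun a => {y a}) with hV0
  have hU0open : @IsOpen _ (prodiscreteTop G A) U0 :=
    isOpen_set_pi Ω.finite_toSet (fun a _ => isOpen_discrete _)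
  have hV0open : @IsOpen _ (prodiscreteTop G A) V0 :=
    isOpen_set_pi (D.image (fun d => c * d)).finite_toSet (fun a _ => isOpen_discrete _)
  have hU0ne : (U0 ∩ S).Nonempty := ⟨0, fun a _ => rfl, hS0⟩
  have hV0ne : (V0 ∩ S).Nonempty := ⟨y, fun a _ => rfl, hy⟩
  obtain ⟨F, hF⟩ := hmix U0 V0 hU0open hV0open hU0ne hV0ne
  obtain ⟨g, hg⟩ := Infinite.exists_notMem_finset F
  obtain ⟨z, ⟨hzU, hzS⟩, hwV, hwS⟩ := hF g hg
  have hzn : τ^[n] z = 0 := hkey z hzS (fun ω hω => hzU ω hω)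
  have hzn1 : τ^[n + 1] z = 0 := by
    rw [Function.iterate_succ_apply', hzn, τ0]
  have hwn1 : τ^[n + 1] (fun h => z (g * h)) = 0 := by
    rw [hshiftiter, hzn1]
    rfl
  have hagree : ∀ d ∈ D, y (c * d) = (fun h => z (g * h)) (c * d) := by
    intro d hd
    exact (hwV (c * d) (Finset.mem_coe.mpr (Finset.mem_image_of_mem _ hd))).symm
  have hfin := hD y (fun h => z (g * h)) c hagree
  rw [hfin, hwn1]
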